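/- Let U ⊆ ℝ^m be a nonempty polyhedral set, M ∈ ℝ^{m×m} symmetric positive semidefinite, B ∈ ℝ^{m×n} injective, and b ∈ (U^∞ ∩ Null(M))° (so that θ_{U,M}(b) < ∞). Define ρ : ℝ^n → ℝ ∪ {+∞} by ρ(y) = θ_{U,M}(b + B y). Then ρ is coercive if and only if (Bᵀ cone(U))° = {0}. -/

import Mathlib

open Matrix Set MeasureTheory
open scoped RealInnerProductSpace

noncomputable section

/-- `E d` is Euclidean space `ℝ^d`. -/
abbrev E (d : ℕ) := EuclideanSpace ℝ (Fin d)

/-- Matrix-vector multiplication as a map between Euclidean spaces. -/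
def mulVecE {m n : ℕ} (B : Matrix (Fin m) (Fin n) ℝ) (y : E n) : E m :=
  Matrix.toEuclideanLin B y

/-- The polar of a set `K`: `K° = {v | ⟪v, w⟫ ≤ 0 for all w ∈ K}`. -/
def polarCone {d : ℕ} (K : Set (E d)) : Set (E d) :=
  {v | ∀ w ∈ K, ⟪v, w⟫ ≤ 0}

/-- The horizon cone of `C`: directions `x` with `w + τ • x ∈ C` for all `w ∈ C`, `τ ≥ 0`. -/
def horizonCone {d : ℕ} (C : Set (E d)) : Set (E d) :=
  {x | ∀ w ∈ C, ∀ τ : ℝ, 0 ≤ τ → w + τ • x ∈ C}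

/-- The null space of a matrix `M`, as a set of vectors. -/
def nullSet {d : ℕ} (M : Matrix (Fin d) (Fin d) ℝ) : Set (E d) :=
  {w | mulVecE M w = 0}

/-- A set is polyhedral if it is of the form `{u | Aᵀ u ≤ a}` (componentwise). -/
def IsPolyhedral {d : ℕ} (U : Set (E d)) : Prop :=
  ∃ (k : ℕ) (A : Matrix (Fin d) (Fin k) ℝ) (a : Fin k → ℝ),
    U = {u | ∀ i, mulVecE Aᵀ u i ≤ a i}

/-- The piecewise linear-quadratic penalty
`θ_{U,M}(w) = sup_{u ∈ U} (⟪u, w⟫ - (1/2) ⟪u, M u⟫)`, valued in `ℝ ∪ {±∞}`. -/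
def theta {m : ℕ} (U : Set (E m)) (M : Matrix (Fin m) (Fin m) ℝ) (w : E m) : EReal :=
  ⨆ u ∈ U, ((⟪u, w⟫ - (1 / 2) * ⟪u, mulVecE M u⟫ : ℝ) : EReal)

/-- `cone U = {t • u | u ∈ U, t ≥ 0}`. -/
def coneOf {d : ℕ} (U : Set (E d)) : Set (E d) :=
  {w | ∃ u ∈ U, ∃ t : ℝ, 0 ≤ t ∧ w = t • u}

/-- A function `ρ : ℝ^n → ℝ ∪ {+∞}` is coercive if `ρ(y) → +∞` as `‖y‖ → ∞`. -/
def Coercive {n : ℕ} (ρ : E n → EReal) : Prop :=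
  ∀ C : ℝ, ∃ R : ℝ, ∀ y : E n, R ≤ ‖y‖ → (C : EReal) ≤ ρ y

/-! ### Auxiliary lemmas -/

section Aux

variable {F : Type*} [NormedAddCommGroup F] [InnerProductSpace ℝ F]

/-- Farkas' lemma, by induction on the number of generators. -/
theorem farkas_aux : ∀ (k : ℕ) (v : Fin k → F) (b : F),
    (∃ t : Fin k → ℝ, (∀ i, 0 ≤ t i) ∧ b = ∑ i, t i • v i) ∨
    (∃ d : F, (∀ i, ⟪v i, d⟫ ≤ 0) ∧ 0 < ⟪b, d⟫) := by
  intro k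
  induction k with
  | zero =>
    intro v b
    by_cases hb : b = 0
    · exact Or.inl ⟨fun i => 0, fun i => le_refl 0, by simp [hb]⟩
    · exact Or.inr ⟨b, fun i => i.elim0,
        lt_of_le_of_ne real_inner_self_nonneg (Ne.symm (inner_self_ne_zero.mpr hb))⟩
  | succ k IH =>
    intro v b
    set v' : Fin k → F := fun i => v i.castSucc with hv'
    set w : F := v (Fin.last k) with hw
    rcases IH v' b with ⟨t, ht, hsum⟩ | ⟨d, hd, hbd⟩
    · refine Or.inl ⟨Fin.snoc t 0, ?_, ?_⟩
      · intro i
        induction i using Fin.lastCases with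
        | last => simp
        | cast i => simp [Fin.snoc_castSucc, ht i]
      · rw [Fin.sum_univ_castSucc]
        simp [hsum, hv']
    · by_cases hwd : ⟪w, d⟫ ≤ 0
      · refine Or.inr ⟨d, ?_, hbd⟩
        intro i
        induction i using Fin.lastCases with
        | last => exact hwd
        | cast i => exact hd i
      · push_neg at hwd
        set α : ℝ := ⟪w, d⟫ with hα
        have hαne : α ≠ 0 := ne_of_gt hwd
        set v'' : Fin k → F := fun i => v' i - (⟪v' i, d⟫ / α) • w with hv''
        set b' : F := b - (⟪b, d⟫ / α) • w with hb'
        rcases IH v'' b' with ⟨t, ht, hsum⟩ | ⟨e, he, hbe⟩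
        · set c : ℝ := (⟪b, d⟫ - ∑ i, t i * ⟪v' i, d⟫) / α with hc
          have hc0 : 0 ≤ c := by
            apply div_nonneg _ hwd.le
            have hs : ∑ i, t i * ⟪v' i, d⟫ ≤ 0 := Finset.sum_nonpos fun i _ =>
              mul_nonpos_of_nonneg_of_nonpos (ht i) (hd i)
            linarith
          have key : b = ∑ i, t i • v' i + c • w := by
            have h1 : b = ∑ i, t i • v'' i + (⟪b, d⟫ / α) • w := by
              rw [← hsum, hb']; abel
            have hsc : (⟪b, d⟫ / α) - ∑ i, t i * (⟪v' i, d⟫ / α) = c := by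
              rw [hc, sub_div, Finset.sum_div]
              congr 1
              exact Finset.sum_congr rfl fun i _ => by ring
            rw [h1, hv'']
            simp only [smul_sub, Finset.sum_sub_distrib, smul_smul, ← Finset.sum_smul]
            rw [← hsc, sub_smul]
            abel
          refine Or.inl ⟨Fin.snoc t c, ?_, ?_⟩
          · intro i
            induction i using Fin.lastCases with
            | last => simpa using hc0
            | cast i => simp [Fin.snoc_castSucc, ht i]
          · rw [Fin.sum_univ_castSucc]
            simpa using key
        · refine Or.inr ⟨e - (⟪w, e⟫ / α) • d, ?_, ?_⟩
          · intro i
            induction i using Fin.lastCases with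
            | last =>
              rw [← hw, inner_sub_right, real_inner_smul_right, ← hα]
              field_simp
              simp
            | cast i =>
              have h1 := he i
              rw [hv''] at h1
              simp only [inner_sub_left, real_inner_smul_left] at h1
              have h2 : ⟪v i.castSucc, e⟫ = ⟪v' i, e⟫ := by rw [hv']
              have h3 : ⟪v i.castSucc, d⟫ = ⟪v' i, d⟫ := by rw [hv']
              rw [inner_sub_right, real_inner_smul_right, h2, h3]
              have : ⟪w, e⟫ / α * ⟪v' i, d⟫ = ⟪v' i, d⟫ / α * ⟪w, e⟫ := by ring
              linarith
          · rw [inner_sub_right, real_inner_smul_right]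
            rw [hb'] at hbe
            simp only [inner_sub_left, real_inner_smul_left] at hbe
            have : ⟪w, e⟫ / α * ⟪b, d⟫ = ⟪b, d⟫ / α * ⟪w, e⟫ := by ring
            linarith

/-- Farkas' lemma over an arbitrary finite index type. -/
theorem farkas' {ι : Type*} [Fintype ι] (v : ι → F) (b : F)
    (h : ∀ d : F, (∀ i, ⟪v i, d⟫ ≤ 0) → ⟪b, d⟫ ≤ 0) :
    ∃ t : ι → ℝ, (∀ i, 0 ≤ t i) ∧ b = ∑ i, t i • v i := by
  set e := Fintype.equivFin ι with he
  rcases farkas_aux (Fintype.card ι) (v ∘ e.symm) b with ⟨t, ht, hsum⟩ | ⟨d, hd, hbd⟩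
  · refine ⟨t ∘ e, fun i => ht _, ?_⟩
    rw [hsum]
    rw [← Equiv.sum_comp e (fun j => t j • (v ∘ e.symm) j)]
    simp
  · exact absurd (h d fun i => by simpa using hd (e i)) (not_le.mpr hbd)

end Aux

lemma inner_E {d : ℕ} (x y : E d) : ⟪x, y⟫ = ∑ i, x i * y i := by
  simp [PiLp.inner_apply, RCLike.inner_apply, mul_comm]

lemma mulVecE_apply {m n : ℕ} (B : Matrix (Fin m) (Fin n) ℝ) (y : E n) (i : Fin m) :
    mulVecE B y i = ∑ j, B i j * y j := by
  simp [mulVecE, Matrix.toEuclideanLin_apply, Matrix.mulVec, dotProduct]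

lemma mulVecE_add {m n : ℕ} (B : Matrix (Fin m) (Fin n) ℝ) (x y : E n) :
    mulVecE B (x + y) = mulVecE B x + mulVecE B y := map_add _ _ _

lemma mulVecE_sub {m n : ℕ} (B : Matrix (Fin m) (Fin n) ℝ) (x y : E n) :
    mulVecE B (x - y) = mulVecE B x - mulVecE B y := map_sub _ _ _

lemma mulVecE_smul {m n : ℕ} (B : Matrix (Fin m) (Fin n) ℝ) (s : ℝ) (x : E n) :
    mulVecE B (s • x) = s • mulVecE B x := map_smul _ _ _

lemma adjoint_E {m n : ℕ} (B : Matrix (Fin m) (Fin n) ℝ) (u : E m) (y : E n) :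
    ⟪mulVecE Bᵀ u, y⟫ = ⟪u, mulVecE B y⟫ := by
  simp only [inner_E, mulVecE_apply, Matrix.transpose_apply]
  simp only [Finset.sum_mul, Finset.mul_sum]
  rw [Finset.sum_comm]
  exact Finset.sum_congr rfl fun i _ => Finset.sum_congr rfl fun j _ => by ring

lemma psd_inner_nonneg {m : ℕ} {M : Matrix (Fin m) (Fin m) ℝ} (hM : M.PosSemidef) (x : E m) :
    0 ≤ ⟪x, mulVecE M x⟫ := by
  have := hM.dotProduct_mulVec_nonneg x
  simp only [inner_E, mulVecE_apply]
  simpa [dotProduct, Matrix.mulVec] using this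

lemma symm_inner_E {m : ℕ} {M : Matrix (Fin m) (Fin m) ℝ} (hMs : Mᵀ = M) (u z : E m) :
    ⟪u, mulVecE M z⟫ = ⟪z, mulVecE M u⟫ := by
  have h := adjoint_E M u z
  rw [hMs] at h
  rw [← h, real_inner_comm]

/-- The key finiteness bound: under the hypotheses, the quadratic objective is
bounded above on `U`. -/
lemma exists_bound {m : ℕ} (U : Set (E m)) (hUpoly : IsPolyhedral U)
    (M : Matrix (Fin m) (Fin m) ℝ) (hM : M.PosSemidef)
    (b : E m) (hb : b ∈ polarCone (horizonCone U ∩ nullSet M)) :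
    ∃ K : ℝ, ∀ u ∈ U, ⟪u, b⟫ - (1 / 2) * ⟪u, mulVecE M u⟫ ≤ K := by
  obtain ⟨k, A, a, hU⟩ := hUpoly
  have hMs : Mᵀ = M := (show M.IsSymm by simpa using hM.1)
  have hMsym : ∀ i j, M i j = M j i := fun i j => by
    conv_lhs => rw [← hMs]
    rfl
  set colA : Fin k → E m := fun i => WithLp.toLp 2 (fun j => A j i : Fin m → ℝ) with hcolA
  set colM : Fin m → E m := fun p => WithLp.toLp 2 (fun j => M j p : Fin m → ℝ) with hcolM
  have hcolA_inner : ∀ i (u : E m), ⟪colA i, u⟫ = mulVecE Aᵀ u i := by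
    intro i u
    rw [inner_E, mulVecE_apply]
    exact Finset.sum_congr rfl fun j _ => by simp [hcolA, Matrix.transpose_apply, mul_comm]
  have hcolM_inner : ∀ p (u : E m), ⟪colM p, u⟫ = mulVecE M u p := by
    intro p u
    rw [inner_E, mulVecE_apply]
    exact Finset.sum_congr rfl fun j _ => by rw [hcolM]; simp [hMsym p j, mul_comm]
  set v : (Fin k ⊕ (Fin m ⊕ Fin m)) → E m :=
    Sum.elim colA (Sum.elim colM (fun p => -colM p)) with hv
  have hfar : ∀ d : E m, (∀ i, ⟪v i, d⟫ ≤ 0) → ⟪b, d⟫ ≤ 0 := by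
    intro d hd
    have hMd : mulVecE M d = 0 := by
      ext p
      have h1 := hd (Sum.inr (Sum.inl p))
      have h2 := hd (Sum.inr (Sum.inr p))
      simp only [hv, Sum.elim_inr, Sum.elim_inl, inner_neg_left] at h1 h2
      have : ⟪colM p, d⟫ = 0 := le_antisymm h1 (by linarith)
      rw [hcolM_inner] at this
      simpa using this
    have hhor : d ∈ horizonCone U := by
      intro w hw τ hτ
      rw [hU] at hw ⊢
      intro i
      have hdi : mulVecE Aᵀ d i ≤ 0 := by
        rw [← hcolA_inner]
        exact hd (Sum.inl i)
      have : mulVecE Aᵀ (w + τ • d) i = mulVecE Aᵀ w i + τ * mulVecE Aᵀ d i := by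
        rw [mulVecE_add, mulVecE_smul]
        rfl
      rw [this]
      have := hw i
      nlinarith [mul_nonpos_of_nonneg_of_nonpos hτ hdi]
    exact hb d ⟨hhor, hMd⟩
  obtain ⟨t, ht, hbsum⟩ := farkas' v b hfar
  set z : E m := WithLp.toLp 2 (fun p => t (Sum.inr (Sum.inl p)) - t (Sum.inr (Sum.inr p)) : Fin m → ℝ) with hz
  refine ⟨∑ i, t (Sum.inl i) * a i + (1 / 2) * ⟪z, mulVecE M z⟫, ?_⟩
  intro u hu
  have hbu : ⟪b, u⟫ = ∑ i, t i * ⟪v i, u⟫ := by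
    rw [hbsum, sum_inner]
    exact Finset.sum_congr rfl fun i _ => real_inner_smul_left _ _ _
  rw [Fintype.sum_sum_type] at hbu
  have hmid : ∑ p, t (Sum.inr p) * ⟪v (Sum.inr p), u⟫ = ⟪z, mulVecE M u⟫ := by
    rw [Fintype.sum_sum_type, inner_E]
    have : ∀ p, (z p : ℝ) * mulVecE M u p
        = t (Sum.inr (Sum.inl p)) * mulVecE M u p - t (Sum.inr (Sum.inr p)) * mulVecE M u p := by
      intro p
      rw [hz]
      ring
    rw [Finset.sum_congr rfl fun p _ => this p, Finset.sum_sub_distrib]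
    congr 1
    · exact Finset.sum_congr rfl fun p _ => by rw [hv]; simp [hcolM_inner]
    · rw [← Finset.sum_neg_distrib]
      exact Finset.sum_congr rfl fun p _ => by
        rw [hv]
        simp only [Sum.elim_inr, inner_neg_left]
        rw [hcolM_inner]
        ring
  have hlin : ∑ i, t (Sum.inl i) * ⟪v (Sum.inl i), u⟫ ≤ ∑ i, t (Sum.inl i) * a i := by
    apply Finset.sum_le_sum
    intro i _
    apply mul_le_mul_of_nonneg_left _ (ht _)
    rw [hv]
    simp only [Sum.elim_inl]
    rw [hcolA_inner]
    rw [hU] at hu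
    exact hu i
  have hquad : ⟪z, mulVecE M u⟫ - (1 / 2) * ⟪u, mulVecE M u⟫ ≤ (1 / 2) * ⟪z, mulVecE M z⟫ := by
    have h0 := psd_inner_nonneg hM (u - z)
    rw [mulVecE_sub, inner_sub_left, inner_sub_right, inner_sub_right] at h0
    have hsymm := symm_inner_E hMs u z
    linarith
  have : ⟪u, b⟫ = ⟪b, u⟫ := real_inner_comm _ _
  linarith

/-- coercivity of rho: with b ∈ (U^∞ ∩ Null M)_polar,
rho(y) = theta_{U,M}(b + B y) is coercive iff (Bᵀ cone U)_polar = {0}. -/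
theorem coercivity_characterization {m n : ℕ}
    (U : Set (E m)) (hUne : U.Nonempty) (hUpoly : IsPolyhedral U)
    (M : Matrix (Fin m) (Fin m) ℝ) (hM : M.PosSemidef)
    (B : Matrix (Fin m) (Fin n) ℝ) (hB : Function.Injective (mulVecE B))
    (b : E m) (hb : b ∈ polarCone (horizonCone U ∩ nullSet M))
    (ρ : E n → EReal) (hρ : ∀ y, ρ y = theta U M (b + mulVecE B y)) :
    Coercive ρ ↔ polarCone (mulVecE Bᵀ '' coneOf U) = {0} := by
  obtain ⟨K, hK⟩ := exists_bound U hUpoly M hM b hb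
  constructor
  · -- coercive → polar = {0}
    intro hcoer
    apply Set.eq_singleton_iff_unique_mem.mpr
    constructor
    · intro w _
      rw [inner_zero_left]
    · intro v hv
      by_contra hv0
      obtain ⟨R, hR⟩ := hcoer (K + 1)
      have hvnorm : 0 < ‖v‖ := norm_pos_iff.mpr hv0
      set τ : ℝ := max (R / ‖v‖) 0 with hτdef
      have hτ0 : 0 ≤ τ := le_max_right _ _
      have hτR : R ≤ ‖τ • v‖ := by
        rw [norm_smul, Real.norm_eq_abs, abs_of_nonneg hτ0]
        calc R = (R / ‖v‖) * ‖v‖ := by field_simp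
        _ ≤ τ * ‖v‖ := by
          apply mul_le_mul_of_nonneg_right (le_max_left _ _) hvnorm.le
      have hge := hR (τ • v) hτR
      have hle : ρ (τ • v) ≤ ((K : ℝ) : EReal) := by
        rw [hρ]
        apply iSup₂_le
        intro u hu
        have hBv : ⟪u, mulVecE B v⟫ ≤ 0 := by
          rw [← adjoint_E, real_inner_comm]
          exact hv (mulVecE Bᵀ u) ⟨u, ⟨u, hu, 1, zero_le_one, (one_smul ℝ u).symm⟩, rfl⟩
        have hterm : ⟪u, b + mulVecE B (τ • v)⟫ - (1 / 2) * ⟪u, mulVecE M u⟫ ≤ K := by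
          rw [mulVecE_smul, inner_add_right, real_inner_smul_right]
          have := hK u hu
          nlinarith [mul_nonpos_of_nonneg_of_nonpos hτ0 hBv]
        exact_mod_cast hterm
      have : ((K + 1 : ℝ) : EReal) ≤ ((K : ℝ) : EReal) := le_trans hge hle
      rw [EReal.coe_le_coe_iff] at this
      linarith
  · -- polar = {0} → coercive
    intro hpolar C
    rcases Nat.eq_zero_or_pos n with hn | hn
    · refine ⟨1, fun y hy => absurd hy ?_⟩
      subst hn
      have : y = 0 := Subsingleton.elim y 0
      rw [this]
      simp
    · -- the unit sphere
      set S := Metric.sphere (0 : E n) 1 with hS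
      have hScomp : IsCompact S := isCompact_sphere 0 1
      have hSne : S.Nonempty := by
        refine ⟨EuclideanSpace.single (⟨0, hn⟩ : Fin n) (1 : ℝ), ?_⟩
        simp [hS, EuclideanSpace.norm_single]
      set ι' := {p : E m × ℝ // p.1 ∈ U ∧ 0 < p.2} with hι'
      set W : ι' → Set (E n) := fun p => {d | p.1.2 < ⟪mulVecE Bᵀ p.1.1, d⟫} with hW
      have hWopen : ∀ p, IsOpen (W p) := by
        intro p
        exact isOpen_lt continuous_const (continuous_const.inner continuous_id)
      have hcover : S ⊆ ⋃ p, W p := by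
        intro d hd
        have hd0 : d ≠ 0 := by
          intro h
          rw [hS, mem_sphere_iff_norm, h] at hd
          simp at hd
        have hdnp : d ∉ polarCone (mulVecE Bᵀ '' coneOf U) := by
          rw [hpolar]
          exact hd0
        rw [polarCone, Set.mem_setOf_eq] at hdnp
        push_neg at hdnp
        obtain ⟨w, ⟨x, ⟨u, hu, t, ht, hx⟩, hw⟩, hdw⟩ := hdnp
        rw [← hw, hx, mulVecE_smul, real_inner_smul_right] at hdw
        have ht' : 0 < t := by
          rcases lt_or_eq_of_le ht with h | h
          · exact h
          · exfalso; rw [← h] at hdw; simp at hdw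
        have hud : 0 < ⟪d, mulVecE Bᵀ u⟫ := by
          by_contra hcon
          push_neg at hcon
          nlinarith
        rw [real_inner_comm] at hud
        refine Set.mem_iUnion.mpr ⟨⟨(u, ⟪mulVecE Bᵀ u, d⟫ / 2), hu, by linarith⟩, ?_⟩
        rw [hW]
        simp only [Set.mem_setOf_eq]
        linarith
      obtain ⟨s, hs⟩ := hScomp.elim_finite_subcover W hWopen hcover
      have hsne : s.Nonempty := by
        obtain ⟨d₀, hd₀⟩ := hSne
        obtain ⟨p, hp, _⟩ := Set.mem_iUnion₂.mp (hs hd₀)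
        exact ⟨p, hp⟩
      set ε : ℝ := s.inf' hsne (fun p => p.1.2) with hε
      have hε0 : 0 < ε := by
        rw [hε, Finset.lt_inf'_iff]
        exact fun p _ => p.2.2
      set C₀ : ℝ := s.inf' hsne
        (fun p => ⟪p.1.1, b⟫ - (1 / 2) * ⟪p.1.1, mulVecE M p.1.1⟫) with hC₀
      refine ⟨max ((C - C₀) / ε) 1, fun y hy => ?_⟩
      have hy1 : (1 : ℝ) ≤ ‖y‖ := le_trans (le_max_right _ _) hy
      have hy0 : y ≠ 0 := by
        intro h
        rw [h, norm_zero] at hy1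
        linarith
      have hynorm : 0 < ‖y‖ := by linarith
      set d : E n := ‖y‖⁻¹ • y with hd
      have hdS : d ∈ S := by
        rw [hS, mem_sphere_iff_norm, sub_zero, hd, norm_smul, Real.norm_eq_abs,
          abs_of_nonneg (inv_nonneg.mpr hynorm.le)]
        field_simp
      obtain ⟨p, hps, hpd⟩ := Set.mem_iUnion₂.mp (hs hdS)
      rw [hW] at hpd
      simp only [Set.mem_setOf_eq] at hpd
      set u : E m := p.1.1 with hu
      have huU : u ∈ U := p.2.1
      have hεp : ε ≤ p.1.2 := Finset.inf'_le _ hps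
      have hinner : ε ≤ ⟪mulVecE Bᵀ u, d⟫ := by linarith
      have hBy : ‖y‖ * ε ≤ ⟪mulVecE Bᵀ u, y⟫ := by
        have : ⟪mulVecE Bᵀ u, d⟫ = ‖y‖⁻¹ * ⟪mulVecE Bᵀ u, y⟫ := by
          rw [hd, real_inner_smul_right]
        rw [this] at hinner
        calc ‖y‖ * ε ≤ ‖y‖ * (‖y‖⁻¹ * ⟪mulVecE Bᵀ u, y⟫) :=
          mul_le_mul_of_nonneg_left hinner hynorm.le
        _ = ⟪mulVecE Bᵀ u, y⟫ := by field_simp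
      have hC₀le : C₀ ≤ ⟪u, b⟫ - (1 / 2) * ⟪u, mulVecE M u⟫ := Finset.inf'_le _ hps
      have hεy : C - C₀ ≤ ‖y‖ * ε := by
        have h1 : (C - C₀) / ε ≤ ‖y‖ := le_trans (le_max_left _ _) hy
        calc C - C₀ = ((C - C₀) / ε) * ε := by field_simp
        _ ≤ ‖y‖ * ε := mul_le_mul_of_nonneg_right h1 hε0.le
      have hfinal : C ≤ ⟪u, b + mulVecE B y⟫ - (1 / 2) * ⟪u, mulVecE M u⟫ := by
        rw [inner_add_right, ← adjoint_E]
        linarith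
      rw [hρ]
      exact le_iSup₂_of_le u huU (by exact_mod_cast hfinal)

end
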